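/- If N is a normal subgroup of W_n, then for every 1 ≤ k ≤ n the product (N ∩ B_k)(N ∩ B_{k+1})···(N ∩ B_n) is a normal subgroup of W_n. -/

import Mathlib

open Equiv MvPolynomial

namespace Wreath

variable (p n : ℕ)

/-- The set of `pⁿ` points on which `W n` acts. -/
abbrev Pts := Fin n → ZMod p

/-- Truncation of a point: keep coordinates below `k`, zero out the rest. -/
def trunc (k : Fin n) (x : Pts p n) : Pts p n := fun j => if j < k then x j else 0

lemma trunc_update (k : Fin n) (x : Pts p n) (v : ZMod p) :
    trunc p n k (Function.update x k v) = trunc p n k x := by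
  funext j
  by_cases hj : j < k
  · simp [trunc, Function.update_of_ne (ne_of_lt hj), hj]
  · simp [trunc, hj]

/-- The permutation `FΔₖ` of `𝔽_pⁿ` sending `x` to `x - F(x₁,…,x_{k-1}) eₖ`. -/
def delta (k : Fin n) (F : Pts p n → ZMod p) : Equiv.Perm (Pts p n) where
  toFun x := Function.update x k (x k - F (trunc p n k x))
  invFun x := Function.update x k (x k + F (trunc p n k x))
  left_inv x := by
    simp only [trunc_update, Function.update_idem, Function.update_self,
      sub_add_cancel, Function.update_eq_self]
  right_inv x := by
    simp only [trunc_update, Function.update_idem, Function.update_self,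
      add_sub_cancel_right, Function.update_eq_self]

/-- A permutation of `𝔽_pⁿ` is triangular if the displacement of the `k`-th coordinate
only depends on the coordinates below `k`.  The triangular permutations form exactly the
iterated wreath product `W_n = ≀ⁿ 𝔽_p`, a Sylow `p`-subgroup of `Sym(pⁿ)`. -/
def Triangular (π : Equiv.Perm (Pts p n)) : Prop :=
  ∀ (k : Fin n) (x y : Pts p n), (∀ j : Fin n, j < k → x j = y j) →
    π x k - x k = π y k - y k

lemma Triangular.agree {π : Equiv.Perm (Pts p n)} (hπ : Triangular p n π) {k : Fin n}
    {x y : Pts p n} (h : ∀ j : Fin n, j < k → x j = y j) :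
    ∀ j : Fin n, j < k → π x j = π y j := by
  intro j hj
  have h2 := hπ j x y (fun i hi => h i (hi.trans hj))
  rw [h j hj] at h2
  exact sub_left_inj.mp h2

lemma Triangular.mul {π σ : Equiv.Perm (Pts p n)} (hπ : Triangular p n π)
    (hσ : Triangular p n σ) : Triangular p n (π * σ) := by
  intro k x y h
  have h1 := hπ k (σ x) (σ y) (hσ.agree p n h)
  have h2 := hσ k x y h
  simp only [Equiv.Perm.mul_apply]
  linear_combination h1 + h2

lemma Triangular.one : Triangular p n 1 := by
  intro k x y h
  simp [h k]

lemma Triangular.inv {π : Equiv.Perm (Pts p n)} (hπ : Triangular p n π) :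
    Triangular p n π⁻¹ := by
  intro k x y h
  have key : ∀ m : ℕ, ∀ j : Fin n, (j : ℕ) ≤ m → j < k → π⁻¹ x j = π⁻¹ y j := by
    intro m
    induction m with
    | zero =>
      intro j hj hjk
      have hb : ∀ i : Fin n, i < j → π⁻¹ x i = π⁻¹ y i := by
        intro i hi
        have hi' : (i : ℕ) < (j : ℕ) := hi
        omega
      have ht := hπ j (π⁻¹ x) (π⁻¹ y) hb
      simp only [Equiv.Perm.coe_inv, Equiv.apply_symm_apply] at ht
      rw [h j hjk] at ht
      exact (sub_right_inj.mp ht)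
    | succ m ih =>
      intro j hj hjk
      have hb : ∀ i : Fin n, i < j → π⁻¹ x i = π⁻¹ y i := by
        intro i hi
        have hi' : (i : ℕ) < (j : ℕ) := hi
        exact ih i (by omega) (hi.trans hjk)
      have ht := hπ j (π⁻¹ x) (π⁻¹ y) hb
      simp only [Equiv.Perm.coe_inv, Equiv.apply_symm_apply] at ht
      rw [h j hjk] at ht
      exact (sub_right_inj.mp ht)
  have hb : ∀ j : Fin n, j < k → π⁻¹ x j = π⁻¹ y j := fun j hj => key j j le_rfl hj
  have ht := hπ k (π⁻¹ x) (π⁻¹ y) hb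
  simp only [Equiv.Perm.coe_inv, Equiv.apply_symm_apply] at ht
  linear_combination -ht

/-- The subgroup of triangular permutations fixing every coordinate `j` satisfying `P j`. -/
def WB (P : Fin n → Prop) : Subgroup (Equiv.Perm (Pts p n)) where
  carrier := {π | Triangular p n π ∧ ∀ (x : Pts p n) (j : Fin n), P j → π x j = x j}
  one_mem' := ⟨Triangular.one p n, by intro x j _; simp⟩
  mul_mem' := by
    rintro a b ⟨ha, ha'⟩ ⟨hb, hb'⟩
    refine ⟨ha.mul p n hb, ?_⟩
    intro x j hj
    simp only [Equiv.Perm.mul_apply]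
    rw [ha' (b x) j hj, hb' x j hj]
  inv_mem' := by
    rintro a ⟨ha, ha'⟩
    refine ⟨ha.inv p n, ?_⟩
    intro x j hj
    have h := ha' (a⁻¹ x) j hj
    rw [Equiv.Perm.coe_inv, Equiv.apply_symm_apply] at h
    exact h.symm

/-- `W p n = ≀ⁿ 𝔽_p` : the iterated wreath product, realized as the group of all
triangular permutations of `𝔽_pⁿ`. -/
def W : Subgroup (Equiv.Perm (Pts p n)) := WB p n (fun _ => False)

/-- The `k`-th base subgroup `B_k` (elements `fΔₖ`, only the `k`-th coordinate moves). -/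
def B (k : Fin n) : Subgroup (Equiv.Perm (Pts p n)) := WB p n (fun j => j ≠ k)

/-- The "tail" subgroup `B_{m+1} ⋯ B_n` (0-indexed: coordinates `< m` are fixed). -/
def Btail (m : ℕ) : Subgroup (Equiv.Perm (Pts p n)) := WB p n (fun j => (j : ℕ) < m)

/-- `γ_i(W_n)` (paper indexing: `γ₁ = W_n`), as a subgroup of `Perm (𝔽_pⁿ)`. -/
def gammaP (i : ℕ) : Subgroup (Equiv.Perm (Pts p n)) :=
  Subgroup.map (W p n).subtype (Subgroup.lowerCentralSeries (⊤ : Subgroup ↥(W p n)) (i - 1))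

/-- `Z_i(W_n)` (with `Z₀ = 1`), as a subgroup of `Perm (𝔽_pⁿ)`. -/
def ZP (i : ℕ) : Subgroup (Equiv.Perm (Pts p n)) :=
  Subgroup.map (W p n).subtype (upperCentralSeries ↥(W p n) i)

/-- The element `fΔₖ` of the base subgroup `B_k` attached to a polynomial `f`. -/
noncomputable def elt (f : MvPolynomial (Fin n) (ZMod p)) (k : Fin n) : Equiv.Perm (Pts p n) :=
  delta p n k (fun t => eval t f)

/-- The monomial element `x^Λ Δₖ`. -/
noncomputable def monoElem (Λ : Fin n →₀ ℕ) (k : Fin n) : Equiv.Perm (Pts p n) :=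
  elt p n (monomial Λ (1 : ZMod p)) k

/-- `pdeg(x^Λ) = Σ λⱼ pʲ` (coordinates 0-indexed). -/
def pdegM (Λ : Fin n →₀ ℕ) : ℕ := ∑ j : Fin n, Λ j * p ^ (j : ℕ)

/-- `μₖ = p^{n-1} - p^k` (0-indexed `k`). -/
def mu (k : Fin n) : ℕ := p ^ (n - 1) - p ^ (k : ℕ)

/-- `pdeg(x^Λ Δₖ) = pdeg(x^Λ) + μₖ`. -/
def pdegMk (Λ : Fin n →₀ ℕ) (k : Fin n) : ℕ := pdegM p n Λ + mu p n k

/-- `pdeg(fΔₖ)`: maximum of the `pdeg` of the monomials of `f`, plus `μₖ`. -/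
def pdegP (f : MvPolynomial (Fin n) (ZMod p)) (k : Fin n) : ℕ :=
  f.support.sup (pdegM p n) + mu p n k

/-- `f` is a reduced polynomial: every variable appears with degree at most `p - 1`. -/
def Reduced (f : MvPolynomial (Fin n) (ZMod p)) : Prop :=
  ∀ Λ ∈ f.support, ∀ j : Fin n, Λ j ≤ p - 1

/-- `f` only involves the variables `xⱼ` with `j < k`. -/
def VarsLt (k : Fin n) (f : MvPolynomial (Fin n) (ZMod p)) : Prop :=
  ∀ Λ ∈ f.support, ∀ j : Fin n, Λ j ≠ 0 → j < k

/-- The normal closure of an element inside the group `W_n`: the smallest subgroup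
containing `g` which is stable under conjugation by every element of `W_n`. -/
def normalClosureIn (g : Equiv.Perm (Pts p n)) : Subgroup (Equiv.Perm (Pts p n)) :=
  sInf {S | g ∈ S ∧ ∀ w ∈ W p n, ∀ s ∈ S, w * s * w⁻¹ ∈ S}

/-- The canonical elementary abelian regular subgroup `T = ⟨Δ₁, …, Δₙ⟩`. -/
def T : Subgroup (Equiv.Perm (Pts p n)) :=
  Subgroup.closure (Set.range fun i : Fin n => delta p n i (fun _ => 1))

end Wreath

section Aux

open Wreath

variable (p n : ℕ)

lemma mem_WB_iff {P : Fin n → Prop} {π : Equiv.Perm (Pts p n)} :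
    π ∈ WB p n P ↔ Triangular p n π ∧ ∀ (x : Pts p n) (j : Fin n), P j → π x j = x j :=
  Iff.rfl

lemma B_le_W (j : Fin n) : B p n j ≤ W p n := fun _ h => ⟨h.1, fun _ _ hf => hf.elim⟩

lemma trunc_eq_of_agree {k : Fin n} {x y : Pts p n} (h : ∀ j : Fin n, j < k → x j = y j) :
    trunc p n k x = trunc p n k y := by
  funext j
  by_cases hj : j < k
  · simp [trunc, hj, h j hj]
  · simp [trunc, hj]

lemma delta_apply (k : Fin n) (F : Pts p n → ZMod p) (x : Pts p n) :
    delta p n k F x = Function.update x k (x k - F (trunc p n k x)) := rfl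

lemma delta_inv_apply (k : Fin n) (F : Pts p n → ZMod p) (x : Pts p n) :
    (delta p n k F)⁻¹ x = Function.update x k (x k + F (trunc p n k x)) := rfl

lemma delta_mem_B (k : Fin n) (F : Pts p n → ZMod p) : delta p n k F ∈ B p n k := by
  constructor
  · intro l x y h
    by_cases hl : l = k
    · subst hl
      have ht : trunc p n l x = trunc p n l y := trunc_eq_of_agree p n h
      simp only [delta_apply, Function.update_self, ht]
      ring
    · simp [delta_apply, Function.update_of_ne hl]
  · intro x l hl
    simp [delta_apply, Function.update_of_ne hl]

lemma B_comm {j : Fin n} {a b : Equiv.Perm (Pts p n)} (ha : a ∈ B p n j) (hb : b ∈ B p n j) :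
    a * b = b * a := by
  apply Equiv.ext
  intro x
  funext l
  simp only [Equiv.Perm.mul_apply]
  by_cases hl : l = j
  · subst hl
    have h1 := ha.1 l (b x) x (fun i hi => hb.2 x i (ne_of_lt hi))
    have h2 := hb.1 l (a x) x (fun i hi => ha.2 x i (ne_of_lt hi))
    linear_combination h1 - h2
  · rw [ha.2 (b x) l hl, hb.2 x l hl, hb.2 (a x) l hl, ha.2 x l hl]

lemma conj_mem_B {i j : Fin n} (hij : i < j) {a b : Equiv.Perm (Pts p n)}
    (ha : a ∈ B p n i) (hb : b ∈ B p n j) : a * b * a⁻¹ ∈ B p n j := by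
  have hai : a⁻¹ ∈ B p n i := inv_mem ha
  refine ⟨(ha.1.mul p n hb.1).mul p n hai.1, ?_⟩
  intro x l hl
  simp only [Equiv.Perm.mul_apply]
  by_cases hli : l = i
  · subst hli
    have hagree : ∀ i' : Fin n, i' < l → (b (a⁻¹ x)) i' = (a⁻¹ x) i' :=
      fun i' hi' => hb.2 _ i' (ne_of_lt (hi'.trans hij))
    have h1 := ha.1 l (b (a⁻¹ x)) (a⁻¹ x) hagree
    have h3 : (b (a⁻¹ x)) l = (a⁻¹ x) l := hb.2 _ l hl
    have hx : a (a⁻¹ x) l = x l := by rw [Equiv.Perm.coe_inv, Equiv.apply_symm_apply]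
    linear_combination h1 + h3 + hx
  · rw [ha.2 _ l hli, hb.2 _ l hl, hai.2 _ l hli]

lemma gen_mem_closure (w : Equiv.Perm (Pts p n)) (hw : w ∈ W p n) :
    w ∈ Subgroup.closure (⋃ i : Fin n, (B p n i : Set (Equiv.Perm (Pts p n)))) := by
  suffices h : ∀ (d : ℕ) (u : Equiv.Perm (Pts p n)), u ∈ W p n →
      (∀ (x : Pts p n) (j : Fin n), (j : ℕ) < n - d → u x j = x j) →
      u ∈ Subgroup.closure (⋃ i : Fin n, (B p n i : Set (Equiv.Perm (Pts p n)))) by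
    exact h n w hw (fun x j hj => absurd hj (by omega))
  intro d
  induction d with
  | zero =>
    intro u hu hfix
    have : u = 1 := by
      apply Equiv.ext
      intro x
      funext j
      exact hfix x j (by simpa using j.isLt)
    subst this
    exact one_mem _
  | succ d ih =>
    intro u hu hfix
    by_cases hnd : n ≤ d
    · exact ih u hu (fun x j hj => absurd hj (by omega))
    · have hmn : n - (d + 1) < n := by omega
      set M : Fin n := ⟨n - (d + 1), hmn⟩ with hM
      have hMval : (M : ℕ) = n - (d + 1) := rfl
      set c := delta p n M (fun t => -(u t M)) with hc
      have hcB : c ∈ B p n M := delta_mem_B p n M _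
      have h1 : u * c⁻¹ ∈ W p n := mul_mem hu (inv_mem (B_le_W p n M hcB))
      have h2 : ∀ (x : Pts p n) (j : Fin n), (j : ℕ) < n - d → (u * c⁻¹) x j = x j := by
        intro x j hj
        have hyx : ∀ l : Fin n, l ≠ M → (c⁻¹ x) l = x l := by
          intro l hl
          rw [hc, delta_inv_apply, Function.update_of_ne hl]
        simp only [Equiv.Perm.mul_apply]
        by_cases hjM : j = M
        · rw [hjM]
          have hyM : (c⁻¹ x) M = x M + -(u (trunc p n M x) M) := by
            rw [hc, delta_inv_apply, Function.update_self]
          have htr0 : trunc p n M x M = 0 := by simp [trunc]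
          have tri : u (trunc p n M x) M - trunc p n M x M = u x M - x M :=
            hu.1 M (trunc p n M x) x (fun i hi => by simp [trunc, hi])
          have tri2 : u (c⁻¹ x) M - (c⁻¹ x) M = u x M - x M :=
            hu.1 M (c⁻¹ x) x (fun i hi => hyx i (ne_of_lt hi))
          linear_combination tri2 + hyM - tri - htr0
        · have hjlt : (j : ℕ) < n - (d + 1) := by
            have hne : (j : ℕ) ≠ n - (d + 1) := fun h => hjM (Fin.ext h)
            omega
          rw [hfix (c⁻¹ x) j hjlt, hyx j hjM]
      have hrw : u = (u * c⁻¹) * c := by group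
      rw [hrw]
      exact mul_mem (ih _ h1 h2)
        (Subgroup.subset_closure (Set.mem_iUnion.2 ⟨M, hcB⟩))

lemma prod_update {G : Type*} [Group G] : ∀ {n : ℕ} (c : Fin n → G) (m : Fin n),
    (∀ j : Fin n, j < m → c j = 1) →
    (List.ofFn c).reverse.prod = (List.ofFn (Function.update c m 1)).reverse.prod * c m := by
  intro n
  induction n with
  | zero => exact fun c m => m.elim0
  | succ n ih =>
    intro c m h1
    induction m using Fin.cases with
    | zero =>
      have he : Function.update c 0 1 ∘ Fin.succ = c ∘ Fin.succ :=
        Function.update_comp_eq_of_forall_ne _ _ (fun x => Fin.succ_ne_zero x)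
      have he' : (fun i : Fin n => Function.update c 0 1 i.succ) = fun i : Fin n => c i.succ :=
        funext fun i => congrFun he i
      simp [List.ofFn_succ, he', Function.update_self]
    | succ i =>
      have hc0 : c 0 = 1 := h1 0 (Fin.succ_pos i)
      have hu0 : Function.update c i.succ 1 0 = 1 := by
        rw [Function.update_of_ne (Fin.succ_ne_zero i).symm]
        exact hc0
      have he : Function.update c i.succ 1 ∘ Fin.succ
          = Function.update (c ∘ Fin.succ) i 1 :=
        Function.update_comp_eq_of_injective _ (Fin.succ_injective n) i 1
      have he' : (fun j : Fin n => Function.update c i.succ 1 j.succ)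
          = Function.update (fun j : Fin n => c j.succ) i 1 :=
        funext fun j => congrFun he j
      have ihh := ih (fun j : Fin n => c j.succ) i
        (fun j hj => h1 j.succ (by simpa using hj))
      simp only [List.ofFn_succ, List.reverse_cons, List.prod_append, List.prod_cons,
        List.prod_nil, mul_one, hc0, hu0, he', ihh]

section Main

variable (N : Subgroup (Equiv.Perm (Pts p n)))

/-- The target set at level `m`. -/
def Tset (m : ℕ) : Set (Equiv.Perm (Pts p n)) :=
  {g | ∃ c : Fin n → Equiv.Perm (Pts p n),
      (∀ j : Fin n, m ≤ (j : ℕ) → c j ∈ N ⊓ B p n j) ∧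
      (∀ j : Fin n, ¬ m ≤ (j : ℕ) → c j = 1) ∧
      g = (List.ofFn c).reverse.prod}

lemma ones_prod : (List.ofFn (fun _ : Fin n => (1 : Equiv.Perm (Pts p n)))).reverse.prod = 1 := by
  apply List.prod_eq_one
  intro x hx
  rw [List.mem_reverse] at hx
  obtain ⟨i, hi⟩ := List.mem_ofFn.1 hx
  exact hi.symm

lemma single_mem_Tset (m : ℕ) (i : Fin n) (him : m ≤ (i : ℕ)) (t : Equiv.Perm (Pts p n))
    (ht : t ∈ N ⊓ B p n i) : t ∈ Tset p n N m := by
  refine ⟨fun j => if j = i then t else 1, ?_, ?_, ?_⟩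
  · intro j hj
    by_cases h : j = i
    · subst h; simpa using ht
    · simp only [if_neg h]; exact one_mem _
  · intro j hj
    have hji : j ≠ i := by rintro rfl; exact hj him
    simp [hji]
  · rw [prod_update _ i (fun j hj => if_neg (ne_of_lt hj))]
    have hupd : Function.update (fun j : Fin n => if j = i then t else 1) i
        (1 : Equiv.Perm (Pts p n)) = fun _ => 1 := by
      funext j
      by_cases h : j = i
      · subst h; simp
      · simp [Function.update_of_ne h, h]
    rw [hupd, if_pos rfl, ones_prod, one_mul]

lemma main_base (m : ℕ) (hnm : n ≤ m) :
    ∃ S : Subgroup (Equiv.Perm (Pts p n)),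
      (S : Set (Equiv.Perm (Pts p n))) = Tset p n N m ∧
      ∀ w ∈ W p n, ∀ s ∈ S, w * s * w⁻¹ ∈ S := by
  refine ⟨⊥, ?_, ?_⟩
  · ext g
    simp only [Subgroup.coe_bot, Set.mem_singleton_iff]
    constructor
    · rintro rfl
      refine ⟨fun _ => 1, fun j hj => absurd hj (by have := j.isLt; omega),
        fun j _ => rfl, (ones_prod p n).symm⟩
    · rintro ⟨c, hc1, hc2, rfl⟩
      have : c = fun _ => 1 := funext fun j => hc2 j (by have := j.isLt; omega)
      rw [this, ones_prod]
  · intro w hw s hs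
    rw [Subgroup.mem_bot] at hs
    subst hs
    simp

lemma main_step (hNnorm : ∀ w ∈ W p n, ∀ g ∈ N, w * g * w⁻¹ ∈ N) :
    ∀ (d m : ℕ), n - m ≤ d →
    ∃ S : Subgroup (Equiv.Perm (Pts p n)),
      (S : Set (Equiv.Perm (Pts p n))) = Tset p n N m ∧
      ∀ w ∈ W p n, ∀ s ∈ S, w * s * w⁻¹ ∈ S := by
  intro d
  induction d with
  | zero => exact fun m hm => main_base p n N m (by omega)
  | succ d ih =>
    intro m hm
    by_cases hnm : n ≤ m
    · exact main_base p n N m hnm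
    · push_neg at hnm
      obtain ⟨S', hS'car, hS'norm⟩ := ih (m + 1) (by omega)
      set M : Fin n := ⟨m, hnm⟩ with hMdef
      have hMval : (M : ℕ) = m := rfl
      -- splitting lemma
      have hsplit : ∀ g : Equiv.Perm (Pts p n),
          g ∈ Tset p n N m ↔ ∃ v ∈ S', ∃ h ∈ N ⊓ B p n M, g = v * h := by
        intro g
        constructor
        · rintro ⟨c, hc1, hc2, rfl⟩
          refine ⟨(List.ofFn (Function.update c M 1)).reverse.prod, ?_, c M,
            hc1 M (le_refl m), ?_⟩
          · rw [← SetLike.mem_coe, hS'car]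
            refine ⟨Function.update c M 1, ?_, ?_, rfl⟩
            · intro j hj
              have hjM : j ≠ M := by
                intro h; subst h; rw [hMval] at hj; omega
              rw [Function.update_of_ne hjM]
              exact hc1 j (by omega)
            · intro j hj
              by_cases h : j = M
              · subst h; simp
              · rw [Function.update_of_ne h]
                have : (j : ℕ) ≠ m := fun hh => h (Fin.ext hh)
                exact hc2 j (by omega)
          · exact prod_update c M (fun j hj => hc2 j (by
              have : (j : ℕ) < m := hj
              omega))
        · rintro ⟨v, hv, h, hh, rfl⟩
          rw [← SetLike.mem_coe, hS'car] at hv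
          obtain ⟨c', hc1', hc2', rfl⟩ := hv
          have hc'M : c' M = 1 := hc2' M (by rw [hMval]; omega)
          refine ⟨Function.update c' M h, ?_, ?_, ?_⟩
          · intro j hj
            by_cases hjM : j = M
            · subst hjM; simpa using hh
            · rw [Function.update_of_ne hjM]
              have : (j : ℕ) ≠ m := fun hh' => hjM (Fin.ext hh')
              exact hc1' j (by omega)
          · intro j hj
            have hjM : j ≠ M := by
              intro hq; subst hq; exact hj (le_of_eq hMval.symm)
            rw [Function.update_of_ne hjM]
            exact hc2' j (by omega)
          · have hp1 := prod_update (Function.update c' M h) M (fun j hj => by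
              have hjM : j ≠ M := ne_of_lt hj
              rw [Function.update_of_ne hjM]
              exact hc2' j (by
                have hlt : (j : ℕ) < m := hj
                omega))
            have hupd : Function.update c' M (1 : Equiv.Perm (Pts p n)) = c' := by
              funext j
              by_cases hj : j = M
              · subst hj; rw [Function.update_self, hc'M]
              · rw [Function.update_of_ne hj]
            rw [hp1, Function.update_idem, Function.update_self, hupd]
      -- define the subgroup
      refine ⟨{
        carrier := Tset p n N m
        one_mem' := (hsplit 1).2 ⟨1, one_mem S', 1, one_mem _, (one_mul 1).symm⟩
        mul_mem' := by
          intro a b ha hb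
          obtain ⟨v1, hv1, h1, hh1, rfl⟩ := (hsplit a).1 ha
          obtain ⟨v2, hv2, h2, hh2, rfl⟩ := (hsplit b).1 hb
          refine (hsplit _).2 ⟨v1 * (h1 * v2 * h1⁻¹),
            mul_mem hv1 (hS'norm h1 (B_le_W p n M hh1.2) v2 hv2),
            h1 * h2, mul_mem hh1 hh2, by group⟩
        inv_mem' := by
          intro a ha
          obtain ⟨v, hv, h, hh, rfl⟩ := (hsplit a).1 ha
          have hconj : h⁻¹ * v⁻¹ * (h⁻¹)⁻¹ ∈ S' :=
            hS'norm h⁻¹ (inv_mem (B_le_W p n M hh.2)) v⁻¹ (inv_mem hv)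
          refine (hsplit _).2 ⟨h⁻¹ * v⁻¹ * (h⁻¹)⁻¹, hconj, h⁻¹, inv_mem hh, by group⟩
      }, rfl, ?_⟩
      -- normality
      set S : Subgroup (Equiv.Perm (Pts p n)) := {
        carrier := Tset p n N m
        one_mem' := (hsplit 1).2 ⟨1, one_mem S', 1, one_mem _, (one_mul 1).symm⟩
        mul_mem' := by
          intro a b ha hb
          obtain ⟨v1, hv1, h1, hh1, rfl⟩ := (hsplit a).1 ha
          obtain ⟨v2, hv2, h2, hh2, rfl⟩ := (hsplit b).1 hb
          refine (hsplit _).2 ⟨v1 * (h1 * v2 * h1⁻¹),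
            mul_mem hv1 (hS'norm h1 (B_le_W p n M hh1.2) v2 hv2),
            h1 * h2, mul_mem hh1 hh2, by group⟩
        inv_mem' := by
          intro a ha
          obtain ⟨v, hv, h, hh, rfl⟩ := (hsplit a).1 ha
          have hconj : h⁻¹ * v⁻¹ * (h⁻¹)⁻¹ ∈ S' :=
            hS'norm h⁻¹ (inv_mem (B_le_W p n M hh.2)) v⁻¹ (inv_mem hv)
          refine (hsplit _).2 ⟨h⁻¹ * v⁻¹ * (h⁻¹)⁻¹, hconj, h⁻¹, inv_mem hh, by group⟩
      } with hSdef
      have hmemS : ∀ g, g ∈ S ↔ g ∈ Tset p n N m := fun g => Iff.rfl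
      have hsub' : ∀ g ∈ S', g ∈ S := fun g hg =>
        (hmemS g).2 ((hsplit g).2 ⟨g, hg, 1, one_mem _, (mul_one g).symm⟩)
      have hsubT : ∀ g, g ∈ Tset p n N (m+1) → g ∈ S := by
        intro g hg
        apply hsub'
        rw [← SetLike.mem_coe, hS'car]
        exact hg
      have hHsub : ∀ h ∈ N ⊓ B p n M, h ∈ S := fun h hh =>
        (hmemS h).2 ((hsplit h).2 ⟨1, one_mem S', h, hh, (one_mul h).symm⟩)
      -- base case of conjugation
      have hbase : ∀ (i : Fin n) (a : Equiv.Perm (Pts p n)), a ∈ B p n i →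
          ∀ s ∈ S, a * s * a⁻¹ ∈ S := by
        intro i a ha s hs
        obtain ⟨v, hv, h, hh, rfl⟩ := (hsplit s).1 ((hmemS s).1 hs)
        have hrw : a * (v * h) * a⁻¹ = (a * v * a⁻¹) * (a * h * a⁻¹) := by group
        rw [hrw]
        have hv' : a * v * a⁻¹ ∈ S := hsub' _ (hS'norm a (B_le_W p n i ha) v hv)
        have hhN : h ∈ N := hh.1
        have hhB : h ∈ B p n M := hh.2
        have hh' : a * h * a⁻¹ ∈ S := by
          rcases lt_trichotomy i M with hiM | hiM | hiM
          · exact hHsub _ ⟨hNnorm a (B_le_W p n i ha) h hhN, conj_mem_B p n hiM ha hhB⟩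
          · subst hiM
            have : a * h * a⁻¹ = h := by
              rw [B_comm p n ha hhB]; group
            rw [this]; exact hHsub h hh
          · have htB : h⁻¹ * a * h ∈ B p n i := by
              have := conj_mem_B p n hiM (inv_mem hhB) ha
              rwa [inv_inv] at this
            have htB' : h⁻¹ * a * h * a⁻¹ ∈ B p n i := mul_mem htB (inv_mem ha)
            have htN : h⁻¹ * a * h * a⁻¹ ∈ N := by
              have h2 : h⁻¹ * (a * h * a⁻¹) ∈ N :=
                mul_mem (inv_mem hhN) (hNnorm a (B_le_W p n i ha) h hhN)
              have e : h⁻¹ * (a * h * a⁻¹) = h⁻¹ * a * h * a⁻¹ := by group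
              rwa [e] at h2
            have hts : h⁻¹ * a * h * a⁻¹ ∈ S := by
              apply hsubT
              apply single_mem_Tset p n N (m+1) i (by
                have : (M : ℕ) < (i : ℕ) := hiM
                omega)
              exact ⟨htN, htB'⟩
            have e : a * h * a⁻¹ = h * (h⁻¹ * a * h * a⁻¹) := by group
            rw [e]
            exact mul_mem (hHsub h hh) hts
        exact mul_mem hv' hh'
      -- full conjugation by closure induction
      intro w hw s hs
      have hwcl := gen_mem_closure p n w hw
      have key : ∀ (u : Equiv.Perm (Pts p n)),
          u ∈ Subgroup.closure (⋃ i : Fin n, (B p n i : Set (Equiv.Perm (Pts p n)))) →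
          (∀ s ∈ S, u * s * u⁻¹ ∈ S) ∧ (∀ s ∈ S, u⁻¹ * s * u ∈ S) := by
        intro u hu
        induction hu using Subgroup.closure_induction with
        | mem a hamem =>
          obtain ⟨_, ⟨i, rfl⟩, haB⟩ := hamem
          constructor
          · exact hbase i a haB
          · intro s hs
            have := hbase i a⁻¹ (inv_mem haB) s hs
            rwa [inv_inv] at this
        | one =>
          constructor <;> intro s hs <;> simpa using hs
        | mul a b _ _ hA hB =>
          constructor
          · intro s hs
            have e : (a * b) * s * (a * b)⁻¹ = a * (b * s * b⁻¹) * a⁻¹ := by group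
            rw [e]
            exact hA.1 _ (hB.1 s hs)
          · intro s hs
            have e : (a * b)⁻¹ * s * (a * b) = b⁻¹ * (a⁻¹ * s * a) * b := by group
            rw [e]
            exact hB.2 _ (hA.2 s hs)
        | inv a _ hA =>
          constructor
          · intro s hs
            have := hA.2 s hs
            simpa using this
          · intro s hs
            have := hA.1 s hs
            simpa using this
      exact (key w hwcl).1 s hs

end Main

end Aux


/-- if `N ⊴ W_n`, then `(N ∩ B_k)(N ∩ B_{k+1})⋯(N ∩ B_n)` is a normal
subgroup of `W_n`. -/
theorem tail_product_normal (p n : ℕ) (hp : p.Prime) (hodd : p ≠ 2)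
    (N : Subgroup (Equiv.Perm (Wreath.Pts p n))) (hNW : N ≤ Wreath.W p n)
    (hNnorm : ∀ w ∈ Wreath.W p n, ∀ g ∈ N, w * g * w⁻¹ ∈ N) (k : Fin n) :
    ∃ S : Subgroup (Equiv.Perm (Wreath.Pts p n)),
      (S : Set (Equiv.Perm (Wreath.Pts p n))) =
        {g | ∃ c : Fin n → Equiv.Perm (Wreath.Pts p n),
          (∀ j, k ≤ j → c j ∈ N ⊓ Wreath.B p n j) ∧ (∀ j, ¬ k ≤ j → c j = 1) ∧
          g = (List.ofFn c).reverse.prod} ∧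
      ∀ w ∈ Wreath.W p n, ∀ s ∈ S, w * s * w⁻¹ ∈ S := by
  obtain ⟨S, hcar, hnorm⟩ := main_step p n N hNnorm n (k : ℕ) (by omega)
  refine ⟨S, ?_, hnorm⟩
  rw [hcar]
  rfl
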